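/- arXiv:1710.10875 — 5 statements merged into one kernel-verified Lean document; each statement's English description precedes it below -/
import Mathlib

section
/- For every fixed positive integer a, one has ∑_{n ≤ x} (B_a(n) − β_a(n)) = x log log x + O(x) as x → ∞; in other words, the average order of B_a(n) − β_a(n) is log log n. -/
open Filter Asymptotics Real

/-- `B n` is the sum of the prime divisors of `n` counted with multiplicity
(so `B 1 = 0`). -/
def B (n : ℕ) : ℕ := (Nat.primeFactorsList n).sum

/-- `beta n` is the sum of the distinct prime divisors of `n` (so `beta 1 = 0`). -/
def beta (n : ℕ) : ℕ := ∑ p ∈ n.primeFactors, p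

/-- `Ba a n = n + a` if `n` is prime, and `B n` otherwise. -/
def Ba (a n : ℕ) : ℕ := if n.Prime then n + a else B n

/-- `betaa a n = n + a` if `n` is prime, and `beta n` otherwise. -/
def betaa (a n : ℕ) : ℕ := if n.Prime then n + a else beta n


section AuxMertens
open Finset


lemma log_sub_log_le {a b : ℝ} (ha : 0 < a) (hab : a ≤ b) :
    Real.log b - Real.log a ≤ (b - a) / a := by
  have hb : 0 < b := lt_of_lt_of_le ha hab
  have h := Real.log_le_sub_one_of_pos (show 0 < b / a by positivity)
  rw [Real.log_div (ne_of_gt hb) (ne_of_gt ha)] at h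
  have : b / a - 1 = (b - a) / a := by field_simp
  linarith [this ▸ h]

lemma le_log_sub_log {a b : ℝ} (ha : 0 < a) (hab : a ≤ b) :
    (b - a) / b ≤ Real.log b - Real.log a := by
  have hb : 0 < b := lt_of_lt_of_le ha hab
  have h := Real.log_le_sub_one_of_pos (show 0 < a / b by positivity)
  rw [Real.log_div (ne_of_gt ha) (ne_of_gt hb)] at h
  have : a / b - 1 = -((b - a) / b) := by field_simp; ring
  linarith [this ▸ h]

/-- Telescoping bound for `∑ log k`. -/
lemma sum_log_bounds (n : ℕ) (hn : 1 ≤ n) :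
    |(∑ k ∈ Icc 1 n, Real.log k) - (n * Real.log n - n + 1)| ≤ Real.log n := by
  set f : ℕ → ℝ := fun k => k * Real.log k - k with hf
  have key : ∀ k : ℕ, 1 ≤ k →
      Real.log k ≤ f (k+1) - f k ∧ f (k+1) - f k ≤ Real.log (k+1) := by
    intro k hk
    have hk0 : (0:ℝ) < k := by exact_mod_cast hk
    have hk1 : (0:ℝ) < (k:ℝ) + 1 := by linarith
    have h1 := log_sub_log_le hk0 (by linarith : (k:ℝ) ≤ (k:ℝ)+1)
    have h2 := le_log_sub_log hk0 (by linarith : (k:ℝ) ≤ (k:ℝ)+1)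
    simp only [add_sub_cancel_left] at h1 h2
    constructor
    · have : f (k+1) - f k = (k:ℝ) * (Real.log (k+1) - Real.log k) + Real.log (k+1) - 1 := by
        simp only [hf]; push_cast; ring
      rw [this]
      have e2 : 1 ≤ (Real.log ((k:ℝ)+1) - Real.log k) * ((k:ℝ)+1) := by
        rwa [div_le_iff₀ hk1] at h2
      nlinarith
    · have : f (k+1) - f k = ((k:ℝ)+1) * (Real.log (k+1) - Real.log k) + Real.log k - 1 := by
        simp only [hf]; push_cast; ring
      rw [this]
      have e1 : (Real.log ((k:ℝ)+1) - Real.log k) * (k:ℝ) ≤ 1 := by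
        rwa [le_div_iff₀ hk0] at h1
      nlinarith
  -- sum over Icc 2 n of log k, compare to f n - f 1
  have tele : ∀ m : ℕ, 1 ≤ m →
      f m - f 1 ≤ (∑ k ∈ Icc 2 m, Real.log k) ∧
      (∑ k ∈ Icc 2 m, Real.log k) ≤ f m - f 1 + Real.log m := by
    intro m hm
    induction m with
    | zero => omega
    | succ m ih =>
      rcases Nat.lt_or_ge m 1 with hm1 | hm1
      · interval_cases m
        simp [f]
      · obtain ⟨ih1, ih2⟩ := ih hm1
        have hstep := key m hm1
        have hIcc : Icc 2 (m+1) = insert (m+1) (Icc 2 m) := by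
          ext j; simp; omega
        rw [hIcc, Finset.sum_insert (by simp)]
        have hlog : Real.log m ≤ Real.log (m+1) :=
          Real.log_le_log (by exact_mod_cast hm1) (by push_cast; linarith)
        push_cast at hstep ⊢
        constructor <;> nlinarith [hstep.1, hstep.2]
  have h1 : Icc 1 n = insert 1 (Icc 2 n) := by
    ext k; simp; omega
  rw [h1, Finset.sum_insert (by simp)]
  obtain ⟨t1, t2⟩ := tele n hn
  have hf1 : f 1 = -1 := by simp [f]
  have hfn : f n = n * Real.log n - n := rfl
  have hlogn : 0 ≤ Real.log n := Real.log_natCast_nonneg n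
  rw [abs_le]
  constructor <;> simp only [Nat.cast_one, Real.log_one] <;> nlinarith



/-- Key double-counting lemma. -/
lemma swap_lemma (K N : ℕ) (hK : 1 ≤ K) (g : ℕ → ℝ) :
    ∑ n ∈ Icc 1 N, ∑ p ∈ n.primeFactors, ((Icc K (n.factorization p)).card : ℝ) * g p
      = ∑ p ∈ (range (N+1)).filter Nat.Prime,
          ∑ k ∈ Icc K N, ((N / p^k : ℕ) : ℝ) * g p := by
  have hIoc : Finset.Icc 1 N = Finset.Ioc 0 N := by ext m; simp [Nat.lt_iff_add_one_le]
  rw [eq_comm]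
  have step1 : ∀ p ∈ (range (N+1)).filter Nat.Prime, ∀ k ∈ Icc K N,
      ((N / p^k : ℕ) : ℝ) * g p = ∑ n ∈ Icc 1 N, (if p^k ∣ n then g p else 0) := by
    intro p _ k _
    rw [← Finset.sum_filter, Finset.sum_const, hIoc, Nat.Ioc_filter_dvd_card_eq_div,
      nsmul_eq_mul]
  calc ∑ p ∈ (range (N+1)).filter Nat.Prime, ∑ k ∈ Icc K N, ((N / p^k : ℕ) : ℝ) * g p
      = ∑ p ∈ (range (N+1)).filter Nat.Prime, ∑ k ∈ Icc K N,
          ∑ n ∈ Icc 1 N, (if p^k ∣ n then g p else 0) :=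
        Finset.sum_congr rfl fun p hp => Finset.sum_congr rfl fun k hk => step1 p hp k hk
    _ = ∑ n ∈ Icc 1 N, ∑ p ∈ (range (N+1)).filter Nat.Prime, ∑ k ∈ Icc K N,
          (if p^k ∣ n then g p else 0) := by
        rw [Finset.sum_congr rfl fun p (_ : p ∈ (range (N+1)).filter Nat.Prime) =>
          (Finset.sum_comm (s := Icc K N) (t := Icc 1 N)
            (f := fun k n => if p^k ∣ n then g p else 0))]
        exact Finset.sum_comm
    _ = ∑ n ∈ Icc 1 N, ∑ p ∈ n.primeFactors, ((Icc K (n.factorization p)).card : ℝ) * g p := by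
        refine Finset.sum_congr rfl fun n hn => ?_
        rw [Finset.mem_Icc] at hn
        have hn0 : n ≠ 0 := by omega
        have inner : ∀ p ∈ (range (N+1)).filter Nat.Prime,
            ∑ k ∈ Icc K N, (if p^k ∣ n then g p else 0)
              = ((Icc K (n.factorization p)).card : ℝ) * g p := by
          intro p hp
          rw [Finset.mem_filter] at hp
          have he : n.factorization p ≤ N := by
            have := Nat.factorization_lt (p := p) hn0
            omega
          have hfe : (Icc K N).filter (fun k => p^k ∣ n) = Icc K (n.factorization p) := by
            ext k
            simp only [Finset.mem_filter, Finset.mem_Icc,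
              hp.2.pow_dvd_iff_le_factorization hn0]
            omega
          rw [← Finset.sum_filter, Finset.sum_const, hfe, nsmul_eq_mul]
        rw [Finset.sum_congr rfl inner]
        refine (Finset.sum_subset ?_ ?_).symm
        · intro p hp
          rw [Nat.mem_primeFactors] at hp
          simp only [Finset.mem_filter, Finset.mem_range]
          exact ⟨by have := Nat.le_of_dvd (by omega) hp.2.1; omega, hp.1⟩
        · intro p hp hnp
          rw [Finset.mem_filter] at hp
          have : n.factorization p = 0 := by
            rw [Nat.factorization_eq_zero_iff]
            right; left
            intro hd
            exact hnp (Nat.mem_primeFactors.mpr ⟨hp.2, hd, hn0⟩)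
          rw [this]
          simp [Finset.Icc_eq_empty_of_lt (by omega : 0 < K)]

lemma B_eq (n : ℕ) :
    (Nat.primeFactorsList n).sum = ∑ p ∈ n.primeFactors, n.factorization p * p := by
  have := Finset.sum_list_map_count (Nat.primeFactorsList n) (id : ℕ → ℕ)
  simp only [List.map_id, id] at this
  rw [this]
  refine Finset.sum_congr rfl fun p hp => ?_
  rw [Nat.primeFactorsList_count_eq, smul_eq_mul]



lemma sum_telescope_le (g f : ℕ → ℝ) (a : ℕ)
    (h : ∀ m, a ≤ m → f (m+1) ≤ g m - g (m+1)) :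
    ∀ M, a ≤ M → ∑ m ∈ Icc (a+1) M, f m ≤ g a - g M := by
  intro M hM
  induction M, hM using Nat.le_induction with
  | base => simp [Finset.Icc_eq_empty_of_lt (Nat.lt_succ_self a)]
  | succ M hM ih =>
    have hins : Icc (a+1) (M+1) = insert (M+1) (Icc (a+1) M) := by
      ext j; simp; omega
    rw [hins, Finset.sum_insert (by simp)]
    have := h M hM
    linarith

lemma sum_telescope_eq (G : ℕ → ℝ) (a : ℕ) :
    ∀ M, a ≤ M → ∑ m ∈ Icc a M, (G (m+1) - G m) = G (M+1) - G a := by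
  intro M hM
  induction M, hM using Nat.le_induction with
  | base => simp
  | succ M hM ih =>
    have hins : Icc a (M+1) = insert (M+1) (Icc a M) := by
      ext j; simp; omega
    rw [hins, Finset.sum_insert (by simp), ih]
    ring

lemma sum_inv_sq_le (M : ℕ) : ∑ m ∈ Icc 2 M, 1/((m:ℝ))^2 ≤ 1 := by
  rcases Nat.lt_or_ge M 1 with hM | hM
  · interval_cases M <;> simp
  · have h := sum_telescope_le (fun m => 1/(m:ℝ)) (fun m => 1/((m:ℝ))^2) 1
      (fun m hm => by
        push_cast
        have hm0 : (0:ℝ) < m := by exact_mod_cast hm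
        rw [div_sub_div _ _ (ne_of_gt hm0) (by positivity : ((m:ℝ)+1) ≠ 0)]
        push_cast
        rw [div_le_div_iff₀ (by positivity) (by positivity)]
        nlinarith) M hM
    have h0 : (0:ℝ) ≤ 1/(M:ℝ) := by positivity
    simp only [Nat.cast_one, div_one] at h
    linarith

lemma sum_inv_msqrt_le (M : ℕ) : ∑ m ∈ Icc 2 M, 1/((m:ℝ) * Real.sqrt m) ≤ 2 := by
  rcases Nat.lt_or_ge M 1 with hM | hM
  · interval_cases M <;> simp
  · have h := sum_telescope_le (fun m => 2/Real.sqrt m) (fun m => 1/((m:ℝ) * Real.sqrt m)) 1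
      (fun m hm => by
        have hm0 : (0:ℝ) < m := by exact_mod_cast hm
        set s := Real.sqrt m with hs
        set t := Real.sqrt (m+1) with ht
        have hs0 : 0 < s := Real.sqrt_pos.mpr hm0
        have ht0 : 0 < t := Real.sqrt_pos.mpr (by linarith)
        have hs2 : s^2 = m := Real.sq_sqrt hm0.le
        have ht2 : t^2 = (m:ℝ)+1 := by
          rw [ht]; rw [Real.sq_sqrt (by positivity)]
        have hst : s ≤ t := Real.sqrt_le_sqrt (by linarith)
        have hcast : ((m+1 : ℕ):ℝ) = (m:ℝ)+1 := by push_cast; ring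
        rw [hcast, ← ht]
        rw [div_sub_div _ _ (ne_of_gt hs0) (ne_of_gt ht0),
          div_le_div_iff₀ (by nlinarith) (by positivity)]
        nlinarith [sq_nonneg (t - s), sq_nonneg (t + s)]) M hM
    simp only [Nat.cast_one, Real.sqrt_one] at h
    have : (0:ℝ) ≤ 2/Real.sqrt M := by positivity
    calc ∑ m ∈ Icc 2 M, 1/((m:ℝ) * Real.sqrt m) ≤ 2/1 - 2/Real.sqrt M := h
      _ ≤ 2 := by linarith

lemma log_le_two_sqrt {x : ℝ} (hx : 1 ≤ x) : Real.log x ≤ 2 * Real.sqrt x := by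
  have h0 : (0:ℝ) < x := by linarith
  have hs : 0 < Real.sqrt x := Real.sqrt_pos.mpr h0
  have h1 : Real.log (Real.sqrt x) ≤ Real.sqrt x - 1 := Real.log_le_sub_one_of_pos hs
  have h2 : Real.log x = 2 * Real.log (Real.sqrt x) := by
    rw [Real.log_sqrt h0.le]; ring
  linarith

lemma sum_log_div_sq_le (M : ℕ) : ∑ m ∈ Icc 2 M, Real.log m/((m:ℝ))^2 ≤ 4 := by
  have h : ∀ m ∈ Icc 2 M, Real.log m/((m:ℝ))^2 ≤ 2 * (1/((m:ℝ) * Real.sqrt m)) := by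
    intro m hm
    rw [Finset.mem_Icc] at hm
    have hm1 : (1:ℝ) ≤ m := by exact_mod_cast hm.1.trans' (by norm_num)
    have hm0 : (0:ℝ) < m := by linarith
    have hs : 0 < Real.sqrt m := Real.sqrt_pos.mpr hm0
    have hsq : Real.sqrt m * Real.sqrt m = m := Real.mul_self_sqrt hm0.le
    have := log_le_two_sqrt hm1
    rw [div_le_iff₀ (by positivity)]
    have hexp : 2 * (1/((m:ℝ) * Real.sqrt m)) * (m:ℝ)^2 = 2 * Real.sqrt m := by
      field_simp
      nlinarith
    rw [hexp]
    linarith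
  calc ∑ m ∈ Icc 2 M, Real.log m/((m:ℝ))^2 ≤ ∑ m ∈ Icc 2 M, 2 * (1/((m:ℝ) * Real.sqrt m)) :=
        Finset.sum_le_sum h
    _ = 2 * ∑ m ∈ Icc 2 M, 1/((m:ℝ) * Real.sqrt m) := by rw [Finset.mul_sum]
    _ ≤ 2 * 2 := by have := sum_inv_msqrt_le M; linarith
    _ = 4 := by norm_num

lemma geom_tail_le {p : ℕ} (hp : 2 ≤ p) (K N : ℕ) :
    ∑ k ∈ Icc K N, ((1:ℝ)/p)^k ≤ 2 * (1/p)^K := by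
  have hp0 : (0:ℝ) < p := by exact_mod_cast Nat.lt_of_lt_of_le (by norm_num) hp
  have hx0 : (0:ℝ) ≤ 1/p := by positivity
  have hx1 : (1:ℝ)/p ≤ 1/2 := by
    rw [div_le_div_iff₀ hp0 (by norm_num)]
    exact_mod_cast by linarith [show (2:ℝ) ≤ p from by exact_mod_cast hp]
  have hxlt : (1:ℝ)/p < 1 := lt_of_le_of_lt hx1 (by norm_num)
  have hIco : Icc K N = Ico K (N+1) := by ext j; simp
  rw [hIco, Finset.sum_Ico_eq_sum_range]
  have : ∀ i ∈ Finset.range (N + 1 - K), ((1:ℝ)/p)^(K+i) = (1/p)^K * (1/p)^i := by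
    intro i _; rw [pow_add]
  rw [Finset.sum_congr rfl this, ← Finset.mul_sum]
  have hgeom : ∑ i ∈ Finset.range (N+1-K), ((1:ℝ)/p)^i ≤ 2 := by
    have hle : ∑ i ∈ Finset.range (N+1-K), ((1:ℝ)/p)^i ≤ ∑' i : ℕ, ((1:ℝ)/p)^i :=
      Summable.sum_le_tsum _ (fun i _ => by positivity) (summable_geometric_of_lt_one hx0 hxlt)
    rw [tsum_geometric_of_lt_one hx0 hxlt] at hle
    have h12 : (1:ℝ) - 1/p ≥ 1/2 := by linarith
    have : ((1:ℝ) - 1/p)⁻¹ ≤ 2 := by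
      rw [inv_le_comm₀ (by linarith) (by norm_num)]
      linarith
    linarith
  have hpK : (0:ℝ) ≤ (1/(p:ℝ))^K := by positivity
  nlinarith

lemma theta_le (N : ℕ) :
    ∑ p ∈ (range (N+1)).filter Nat.Prime, Real.log p ≤ N * Real.log 4 := by
  have h1 : ∑ p ∈ (range (N+1)).filter Nat.Prime, Real.log p
      = Real.log (primorial N) := by
    rw [primorial]
    push_cast
    rw [Real.log_prod]
    intro p hp
    simp only [Finset.mem_filter] at hp
    exact_mod_cast hp.2.pos.ne'
  rw [h1]
  calc Real.log (primorial N) ≤ Real.log ((4:ℕ)^N) :=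
        Real.log_le_log (by exact_mod_cast primorial_pos N) (by exact_mod_cast primorial_le_4_pow N)
  _ = N * Real.log 4 := by rw [Real.log_pow]; norm_num



lemma nat_div_le_real (N p : ℕ) : ((N/p : ℕ):ℝ) ≤ (N:ℝ)/p := Nat.cast_div_le

lemma real_div_sub_one_le_nat_div (N p : ℕ) (hp : 0 < p) :
    (N:ℝ)/p - 1 ≤ ((N/p : ℕ):ℝ) := by
  have h := Nat.div_add_mod N p
  have hm : N % p < p := Nat.mod_lt _ hp
  have hpR : (0:ℝ) < p := by exact_mod_cast hp
  have hc : (N:ℝ) = p * ((N/p : ℕ):ℝ) + ((N%p : ℕ):ℝ) := by exact_mod_cast h.symm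
  have hmR : ((N%p : ℕ):ℝ) < p := by exact_mod_cast hm
  rw [sub_le_iff_le_add, div_le_iff₀ hpR]
  nlinarith

lemma log_eq_sum (n : ℕ) (hn : n ≠ 0) :
    Real.log n = ∑ p ∈ n.primeFactors, (n.factorization p : ℝ) * Real.log p := by
  have h := Nat.factorization_prod_pow_eq_self hn
  rw [Finsupp.prod] at h
  have hsupp : (Nat.factorization n).support = n.primeFactors := Nat.support_factorization n
  rw [hsupp] at h
  calc Real.log n = Real.log (∏ p ∈ n.primeFactors, ((p:ℝ)^(n.factorization p))) := by
        conv_lhs => rw [← h]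
        push_cast
        ring_nf
    _ = ∑ p ∈ n.primeFactors, (n.factorization p : ℝ) * Real.log p := by
        rw [Real.log_prod]
        · exact Finset.sum_congr rfl fun p hp => by rw [Real.log_pow]
        · intro p hp
          have := (Nat.prime_of_mem_primeFactors hp).pos
          positivity

theorem mertens1 (N : ℕ) (hN : 2 ≤ N) :
    |(∑ p ∈ (range (N+1)).filter Nat.Prime, Real.log p / p) - Real.log N| ≤ 13 := by
  have hN1 : 1 ≤ N := by omega
  set P := (range (N+1)).filter Nat.Prime with hP
  -- facts about members of P
  have hPfact : ∀ p ∈ P, p.Prime ∧ 2 ≤ p ∧ (0:ℝ) < p ∧ 0 ≤ Real.log p := by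
    intro p hp
    rw [hP, Finset.mem_filter] at hp
    have h2 : 2 ≤ p := hp.2.two_le
    exact ⟨hp.2, h2, by exact_mod_cast Nat.lt_of_lt_of_le (by norm_num) h2,
      Real.log_natCast_nonneg p⟩
  -- the swap identity with K = 1
  have swap1 := swap_lemma 1 N le_rfl (fun p => Real.log p)
  have lhs_eq : ∑ n ∈ Icc 1 N, ∑ p ∈ n.primeFactors,
      ((Icc 1 (n.factorization p)).card : ℝ) * Real.log p = ∑ n ∈ Icc 1 N, Real.log n := by
    refine Finset.sum_congr rfl fun n hn => ?_
    rw [Finset.mem_Icc] at hn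
    rw [log_eq_sum n (by omega)]
    refine Finset.sum_congr rfl fun p hp => ?_
    rw [Nat.card_Icc]
    norm_num
  rw [lhs_eq] at swap1
  -- split k = 1 from the rest
  have hsplit : ∀ p ∈ P, ∑ k ∈ Icc 1 N, ((N / p^k : ℕ) : ℝ) * Real.log p
      = ((N/p : ℕ):ℝ) * Real.log p + ∑ k ∈ Icc 2 N, ((N / p^k : ℕ) : ℝ) * Real.log p := by
    intro p hp
    have h1 : Icc 1 N = insert 1 (Icc 2 N) := by ext j; simp; omega
    rw [h1, Finset.sum_insert (by simp), pow_one]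
  rw [Finset.sum_congr rfl hsplit, Finset.sum_add_distrib] at swap1
  -- bound the tail
  have tail_nonneg : 0 ≤ ∑ p ∈ P, ∑ k ∈ Icc 2 N, ((N / p^k : ℕ) : ℝ) * Real.log p := by
    refine Finset.sum_nonneg fun p hp => Finset.sum_nonneg fun k _ => ?_
    exact mul_nonneg (by positivity) (hPfact p hp).2.2.2
  have tail_le : ∑ p ∈ P, ∑ k ∈ Icc 2 N, ((N / p^k : ℕ) : ℝ) * Real.log p ≤ 8 * N := by
    have hper : ∀ p ∈ P, ∑ k ∈ Icc 2 N, ((N / p^k : ℕ) : ℝ) * Real.log p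
        ≤ 2 * N * (Real.log p / (p:ℝ)^2) := by
      intro p hp
      obtain ⟨hpp, hp2, hpR, hlog⟩ := hPfact p hp
      have step : ∀ k ∈ Icc 2 N, ((N / p^k : ℕ) : ℝ) * Real.log p
          ≤ (N * ((1:ℝ)/p)^k) * Real.log p := by
        intro k _
        refine mul_le_mul_of_nonneg_right ?_ hlog
        calc ((N / p^k : ℕ) : ℝ) ≤ (N:ℝ)/(p^k : ℕ) := nat_div_le_real N (p^k)
          _ = N * ((1:ℝ)/p)^k := by push_cast; rw [div_pow]; ring_nf
      calc ∑ k ∈ Icc 2 N, ((N / p^k : ℕ) : ℝ) * Real.log p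
          ≤ ∑ k ∈ Icc 2 N, (N * ((1:ℝ)/p)^k) * Real.log p := Finset.sum_le_sum step
        _ = (N * Real.log p) * ∑ k ∈ Icc 2 N, ((1:ℝ)/p)^k := by
            rw [Finset.mul_sum]; exact Finset.sum_congr rfl fun k _ => by ring
        _ ≤ (N * Real.log p) * (2 * (1/p)^2) := by
            refine mul_le_mul_of_nonneg_left (geom_tail_le hp2 2 N) ?_
            positivity
        _ = 2 * N * (Real.log p / (p:ℝ)^2) := by field_simp
    calc ∑ p ∈ P, ∑ k ∈ Icc 2 N, ((N / p^k : ℕ) : ℝ) * Real.log p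
        ≤ ∑ p ∈ P, 2 * N * (Real.log p / (p:ℝ)^2) := Finset.sum_le_sum hper
      _ = 2 * N * ∑ p ∈ P, Real.log p / (p:ℝ)^2 := by rw [Finset.mul_sum]
      _ ≤ 2 * N * ∑ m ∈ Icc 2 N, Real.log m / (m:ℝ)^2 := by
          refine mul_le_mul_of_nonneg_left ?_ (by positivity)
          refine Finset.sum_le_sum_of_subset_of_nonneg ?_ ?_
          · intro p hp
            obtain ⟨hpp, hp2, _, _⟩ := hPfact p hp
            rw [hP, Finset.mem_filter, Finset.mem_range] at hp
            rw [Finset.mem_Icc]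
            omega
          · intro m hm _
            rw [Finset.mem_Icc] at hm
            have : (1:ℝ) ≤ m := by exact_mod_cast le_trans (by norm_num) hm.1
            have := Real.log_natCast_nonneg m
            positivity
      _ ≤ 2 * N * 4 := by
          refine mul_le_mul_of_nonneg_left (sum_log_div_sq_le N) (by positivity)
      _ = 8 * N := by ring
  -- compare the k = 1 part with N * M1
  have main_cmp : |(∑ p ∈ P, ((N/p : ℕ):ℝ) * Real.log p)
      - N * (∑ p ∈ P, Real.log p / p)| ≤ N * Real.log 4 := by
    have : N * (∑ p ∈ P, Real.log p / p) = ∑ p ∈ P, (N:ℝ)/p * Real.log p := by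
      rw [Finset.mul_sum]; exact Finset.sum_congr rfl fun p hp => by ring
    rw [this, ← Finset.sum_sub_distrib]
    calc |∑ p ∈ P, (((N/p : ℕ):ℝ) * Real.log p - (N:ℝ)/p * Real.log p)|
        ≤ ∑ p ∈ P, |((N/p : ℕ):ℝ) * Real.log p - (N:ℝ)/p * Real.log p| :=
          Finset.abs_sum_le_sum_abs _ _
      _ ≤ ∑ p ∈ P, Real.log p := by
          refine Finset.sum_le_sum fun p hp => ?_
          obtain ⟨hpp, hp2, hpR, hlog⟩ := hPfact p hp
          have h1 := nat_div_le_real N p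
          have h2 := real_div_sub_one_le_nat_div N p (by omega)
          rw [abs_le]
          constructor <;> nlinarith
      _ ≤ N * Real.log 4 := theta_le N
  -- the sum of logs
  have hlogs := sum_log_bounds N hN1
  -- put everything together
  have hlogN_nonneg : 0 ≤ Real.log N := Real.log_natCast_nonneg N
  have hlogN_le : Real.log N ≤ N := by
    have := Real.log_le_sub_one_of_pos (show (0:ℝ) < N by positivity)
    linarith
  have hlog4 : Real.log 4 ≤ 3 := by
    have := Real.log_le_sub_one_of_pos (show (0:ℝ) < 4 by norm_num)
    linarith
  have hNR : (2:ℝ) ≤ N := by exact_mod_cast hN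
  rw [abs_le] at hlogs main_cmp ⊢
  constructor
  · nlinarith [swap1, tail_nonneg, tail_le, main_cmp.1, main_cmp.2, hlogs.1, hlogs.2]
  · nlinarith [swap1, tail_nonneg, tail_le, main_cmp.1, main_cmp.2, hlogs.1, hlogs.2]


lemma abel_discrete (f F A : ℕ → ℝ) (hA : ∀ m, A m = ∑ j ∈ Icc 2 m, f j) :
    ∀ M, 2 ≤ M →
    ∑ m ∈ Icc 2 M, f m * F m
      = A M * F M + ∑ m ∈ Icc 2 (M-1), A m * (F m - F (m+1)) := by
  intro M hM
  induction M, hM using Nat.le_induction with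
  | base => simp [hA]
  | succ M hM ih =>
    have h1 : Icc 2 (M+1) = insert (M+1) (Icc 2 M) := by ext j; simp; omega
    have h2 : (M+1) - 1 = M := by omega
    have h3 : Icc 2 M = insert M (Icc 2 (M-1)) := by ext j; simp; omega
    have hAs : A (M+1) = f (M+1) + A M := by
      rw [hA, hA, h1, Finset.sum_insert (by simp)]
    rw [h1, Finset.sum_insert (by simp), ih, h2]
    conv_rhs => rw [h3, Finset.sum_insert (by simp; omega)]
    rw [hAs]
    ring

lemma filter_prime_sum (M : ℕ) (f : ℕ → ℝ) :
    ∑ p ∈ (range (M+1)).filter Nat.Prime, f p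
      = ∑ m ∈ Icc 2 M, (if m.Prime then f m else 0) := by
  rw [← Finset.sum_filter]
  congr 1
  ext p
  simp only [Finset.mem_filter, Finset.mem_range, Finset.mem_Icc, Nat.lt_succ_iff]
  exact ⟨fun ⟨h1, h2⟩ => ⟨⟨h2.two_le, h1⟩, h2⟩, fun ⟨h1, h2⟩ => ⟨h1.2, h2⟩⟩

lemma log_two_ge : (1:ℝ)/2 ≤ Real.log 2 := by
  have h4 : (1:ℝ) ≤ Real.log 4 := by
    rw [show (4:ℝ) = 2^2 by norm_num]
    have : Real.exp 1 ≤ 4 := by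
      have := Real.exp_one_lt_d9
      norm_num at this ⊢
      linarith
    calc (1:ℝ) = Real.log (Real.exp 1) := by rw [Real.log_exp]
      _ ≤ Real.log (2^2) := Real.log_le_log (Real.exp_pos 1) (by norm_num; linarith)
  have : Real.log 4 = 2 * Real.log 2 := by
    rw [show (4:ℝ) = 2^2 by norm_num, Real.log_pow]
    norm_num
  linarith

set_option maxHeartbeats 1000000 in
theorem mertens2 (M : ℕ) (hM : 3 ≤ M) :
    |(∑ p ∈ (range (M+1)).filter Nat.Prime, 1/(p:ℝ)) - Real.log (Real.log M)| ≤ 60 := by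
  classical
  set f : ℕ → ℝ := fun m => if m.Prime then Real.log m / m else 0 with hf
  set F : ℕ → ℝ := fun m => 1 / Real.log m with hF
  set A : ℕ → ℝ := fun m => ∑ j ∈ Icc 2 m, f j with hAdef
  have hA : ∀ m, A m = ∑ j ∈ Icc 2 m, f j := fun m => rfl
  -- A m equals the prime sum, so Mertens 1 applies
  have hAm : ∀ m, 2 ≤ m → |A m - Real.log m| ≤ 13 := by
    intro m hm
    have := mertens1 m hm
    rwa [filter_prime_sum m (fun p => Real.log p / p), ← hf, ← hA] at this
  -- the sum of 1/p is the Abel sum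
  have hsum : ∑ p ∈ (range (M+1)).filter Nat.Prime, 1/(p:ℝ)
      = ∑ m ∈ Icc 2 M, f m * F m := by
    rw [filter_prime_sum M (fun p => 1/(p:ℝ))]
    refine Finset.sum_congr rfl fun m hm => ?_
    rw [Finset.mem_Icc] at hm
    by_cases hp : m.Prime
    · simp only [hf, hF, hp, if_true]
      have hm2 : (2:ℝ) ≤ m := by exact_mod_cast hm.1
      have hlog : Real.log m ≠ 0 := by
        have := log_two_ge
        have h2 := Real.log_le_log (by norm_num : (0:ℝ) < 2) hm2
        intro h0
        rw [h0] at h2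
        linarith
      field_simp
    · simp [hf, hp]
  rw [hsum, abel_discrete f F A hA M (by omega)]
  -- basic log facts
  have hlog2 := log_two_ge
  have logm_pos : ∀ m : ℕ, 2 ≤ m → (1:ℝ)/2 ≤ Real.log m := by
    intro m hm
    have : (2:ℝ) ≤ m := by exact_mod_cast hm
    have := Real.log_le_log (by norm_num : (0:ℝ) < 2) this
    linarith
  have hlogM : (1:ℝ)/2 ≤ Real.log M := logm_pos M (by omega)
  -- Term 1 : A M * F M = 1 + R/log M with |R| ≤ 13
  have term1 : |A M * F M - 1| ≤ 26 := by
    have h13 := hAm M (by omega)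
    have hFM : F M = 1 / Real.log M := rfl
    have hlogM0 : Real.log M ≠ 0 := by positivity
    have : A M * F M - 1 = (A M - Real.log M) / Real.log M := by
      rw [hFM]; field_simp
    rw [this, abs_div, abs_of_pos (by linarith : (0:ℝ) < Real.log M)]
    rw [div_le_iff₀ (by linarith)]
    have := abs_nonneg (A M - Real.log M)
    nlinarith
  -- Term 2
  set G : ℕ → ℝ := fun m => Real.log (Real.log m) with hG
  have term2 : |(∑ m ∈ Icc 2 (M-1), A m * (F m - F (m+1))) - (G M - G 2)| ≤ 31 := by
    have hM1 : 2 ≤ M - 1 := by omega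
    have hM11 : (M - 1) + 1 = M := by omega
    -- F is "decreasing": F m - F (m+1) ≥ 0 for m ≥ 2
    have hFmono : ∀ m : ℕ, 2 ≤ m → 0 ≤ F m - F (m+1) := by
      intro m hm
      have h1 := logm_pos m hm
      have h2 := logm_pos (m+1) (by omega)
      have hle : Real.log ((m:ℕ):ℝ) ≤ Real.log (((m+1:ℕ)):ℝ) := by
        apply Real.log_le_log
        · have : (2:ℝ) ≤ (m:ℝ) := by exact_mod_cast hm
          linarith
        · exact_mod_cast Nat.le_succ m
      simp only [hF]
      rw [sub_nonneg, div_le_div_iff₀ (by linarith) (by linarith)]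
      nlinarith
    -- telescoping sum of F-differences
    have htelF : ∑ m ∈ Icc 2 (M-1), (F m - F (m+1)) = F 2 - F M := by
      have htel := sum_telescope_eq F 2 (M-1) hM1
      rw [hM11] at htel
      have : ∀ m ∈ Icc 2 (M-1), F m - F (m+1) = -(F (m+1) - F m) := fun m _ => by ring
      rw [Finset.sum_congr rfl this, Finset.sum_neg_distrib, htel]
      ring
    have hF2 : F 2 ≤ 2 := by
      simp only [hF]
      rw [div_le_iff₀ (by push_cast; linarith)]
      push_cast
      linarith
    have hFM0 : 0 ≤ F M := by
      simp only [hF]; positivity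
    -- split A m = log m + (A m - log m)
    have split : ∑ m ∈ Icc 2 (M-1), A m * (F m - F (m+1))
        = (∑ m ∈ Icc 2 (M-1), Real.log m * (F m - F (m+1)))
          + ∑ m ∈ Icc 2 (M-1), (A m - Real.log m) * (F m - F (m+1)) := by
      rw [← Finset.sum_add_distrib]
      exact Finset.sum_congr rfl fun m _ => by ring
    -- remainder part
    have hR : |∑ m ∈ Icc 2 (M-1), (A m - Real.log m) * (F m - F (m+1))| ≤ 26 := by
      calc |∑ m ∈ Icc 2 (M-1), (A m - Real.log m) * (F m - F (m+1))|
          ≤ ∑ m ∈ Icc 2 (M-1), |(A m - Real.log m) * (F m - F (m+1))| :=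
            Finset.abs_sum_le_sum_abs _ _
        _ ≤ ∑ m ∈ Icc 2 (M-1), 13 * (F m - F (m+1)) := by
            refine Finset.sum_le_sum fun m hm => ?_
            rw [Finset.mem_Icc] at hm
            rw [abs_mul, abs_of_nonneg (hFmono m hm.1)]
            exact mul_le_mul_of_nonneg_right (hAm m hm.1) (hFmono m hm.1)
        _ = 13 * ∑ m ∈ Icc 2 (M-1), (F m - F (m+1)) := by rw [Finset.mul_sum]
        _ ≤ 26 := by rw [htelF]; nlinarith
    -- main part
    have htelG : ∑ m ∈ Icc 2 (M-1), (G (m+1) - G m) = G M - G 2 := by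
      have := sum_telescope_eq G 2 (M-1) hM1
      rwa [hM11] at this
    have herr : ∀ m ∈ Icc 2 (M-1),
        |Real.log m * (F m - F (m+1)) - (G (m+1) - G m)| ≤ 4 * (1/((m:ℝ))^2) := by
      intro m hm
      rw [Finset.mem_Icc] at hm
      have hm2 : 2 ≤ m := hm.1
      have hmR : (2:ℝ) ≤ m := by exact_mod_cast hm2
      set p := Real.log m with hp
      set q := Real.log ((m:ℝ)+1) with hq
      have hq' : Real.log ((m+1 : ℕ):ℝ) = q := by push_cast; rfl
      have hpl : (1:ℝ)/2 ≤ p := logm_pos m hm2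
      have hpq : p ≤ q := Real.log_le_log (by linarith) (by linarith)
      have hDu : q - p ≤ 1/(m:ℝ) := by
        have := log_sub_log_le (show (0:ℝ) < m by linarith) (by linarith : (m:ℝ) ≤ (m:ℝ)+1)
        simpa using this
      have hD0 : 0 ≤ q - p := by linarith
      -- G difference bounds
      have hGd : G (m+1) - G m = Real.log q - Real.log p := by
        simp only [hG, hq', hp]
      have hL1 : (q - p)/q ≤ Real.log q - Real.log p := le_log_sub_log (by linarith) hpq
      have hL2 : Real.log q - Real.log p ≤ (q - p)/p := log_sub_log_le (by linarith) hpq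
      have hp0 : p ≠ 0 := ne_of_gt (by linarith)
      have hq0 : q ≠ 0 := ne_of_gt (by linarith)
      -- the F part equals (q-p)/q
      have hFpart : Real.log m * (F m - F (m+1)) = (q - p)/q := by
        simp only [hF, hq', ← hp]
        field_simp
      rw [hFpart, hGd, abs_le]
      have e1 : (q-p)/p - (q-p)/q = (q-p)^2/(p*q) := by
        field_simp
      have e2 : (q-p)^2/(p*q) ≤ 4 * (1/((m:ℝ))^2) := by
        rw [div_le_iff₀ (by nlinarith)]
        have h1 : (q-p)^2 ≤ (1/(m:ℝ))^2 := by nlinarith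
        have h2 : (1:ℝ)/4 ≤ p * q := by nlinarith
        have h3 : (0:ℝ) < (m:ℝ)^2 := by positivity
        have h4 : (1/(m:ℝ))^2 = 1/(m:ℝ)^2 := by field_simp
        rw [h4] at h1
        calc (q-p)^2 ≤ 1/(m:ℝ)^2 := h1
          _ = 4 * (1/(m:ℝ)^2) * (1/4) := by ring
          _ ≤ 4 * (1/(m:ℝ)^2) * (p*q) := by
              refine mul_le_mul_of_nonneg_left h2 (by positivity)
      constructor
      · linarith
      · linarith
    have hmain : |(∑ m ∈ Icc 2 (M-1), Real.log m * (F m - F (m+1))) - (G M - G 2)| ≤ 4 := by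
      rw [← htelG, ← Finset.sum_sub_distrib]
      calc |∑ m ∈ Icc 2 (M-1), (Real.log m * (F m - F (m+1)) - (G (m+1) - G m))|
          ≤ ∑ m ∈ Icc 2 (M-1), |Real.log m * (F m - F (m+1)) - (G (m+1) - G m)| :=
            Finset.abs_sum_le_sum_abs _ _
        _ ≤ ∑ m ∈ Icc 2 (M-1), 4 * (1/((m:ℝ))^2) := Finset.sum_le_sum herr
        _ = 4 * ∑ m ∈ Icc 2 (M-1), 1/((m:ℝ))^2 := by rw [Finset.mul_sum]
        _ ≤ 4 := by have := sum_inv_sq_le (M-1); nlinarith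
    rw [split]
    calc |(∑ m ∈ Icc 2 (M-1), Real.log m * (F m - F (m+1)))
          + (∑ m ∈ Icc 2 (M-1), (A m - Real.log m) * (F m - F (m+1))) - (G M - G 2)|
        ≤ |(∑ m ∈ Icc 2 (M-1), Real.log m * (F m - F (m+1))) - (G M - G 2)|
          + |∑ m ∈ Icc 2 (M-1), (A m - Real.log m) * (F m - F (m+1))| := by
          rw [add_sub_right_comm]
          exact abs_add_le _ _
      _ ≤ 31 := by linarith
  -- conclude
  have h2c : ((2:ℕ):ℝ) = 2 := by norm_num
  have hlog2le : Real.log 2 ≤ 1 := by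
    have := Real.log_le_sub_one_of_pos (show (0:ℝ) < 2 by norm_num)
    linarith
  have hG2u : G 2 ≤ 0 := by
    simp only [hG, h2c]
    calc Real.log (Real.log 2) ≤ Real.log 1 :=
          Real.log_le_log (by linarith) (by linarith)
      _ = 0 := Real.log_one
  have hG2l : -1 ≤ G 2 := by
    simp only [hG, h2c]
    have h3 : Real.log (1/2) ≤ Real.log (Real.log 2) :=
      Real.log_le_log (by norm_num) log_two_ge
    rw [one_div, Real.log_inv] at h3
    linarith
  have hGM : G M = Real.log (Real.log M) := rfl
  rw [abs_le] at term1 term2 ⊢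
  constructor
  · nlinarith [term1.1, term2.1]
  · nlinarith [term1.2, term2.2]

lemma Ba_sub_betaa (a n : ℕ) : (Ba a n : ℝ) - betaa a n = (B n : ℝ) - beta n := by
  by_cases hp : n.Prime
  · have hB : B n = n := by
      simp [B, Nat.primeFactorsList_prime hp]
    have hb : beta n = n := by
      rw [beta, hp.primeFactors, Finset.sum_singleton]
    simp only [Ba, betaa, if_pos hp, hB, hb]
    ring
  · simp [Ba, betaa, hp]

lemma B_sub_beta_eq (n : ℕ) (hn : 1 ≤ n) :
    (B n : ℝ) - beta n
      = ∑ p ∈ n.primeFactors, ((Icc 2 (n.factorization p)).card : ℝ) * p := by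
  rw [B, B_eq, beta]
  push_cast
  rw [← Finset.sum_sub_distrib]
  refine Finset.sum_congr rfl fun p hp => ?_
  have he : 1 ≤ n.factorization p :=
    (Nat.Prime.factorization_pos_of_dvd (Nat.prime_of_mem_primeFactors hp) (by omega)
      (Nat.dvd_of_mem_primeFactors hp))
  rw [Nat.card_Icc]
  have h3 : n.factorization p + 1 - 2 = n.factorization p - 1 := by omega
  rw [h3, Nat.cast_sub he]
  push_cast
  ring

set_option maxHeartbeats 1600000 in
/-- The main estimate for the summatory function, for `⌊x⌋₊ = N` large. -/
lemma main_estimate (x : ℝ) (hx : 100 ≤ x) :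
    |(∑ n ∈ Finset.Icc 1 ⌊x⌋₊, ((B n : ℝ) - (beta n : ℝ)))
      - x * Real.log (Real.log x)| ≤ 100 * x := by
  set N := ⌊x⌋₊ with hN
  have hxpos : (0:ℝ) < x := by linarith
  have hN100 : 100 ≤ N := by
    rw [hN, Nat.le_floor_iff hxpos.le]; exact_mod_cast hx
  have hNx : (N:ℝ) ≤ x := Nat.floor_le hxpos.le
  have hxN1 : x < N + 1 := Nat.lt_floor_add_one x
  set M := Nat.sqrt N with hM
  have hM10 : 10 ≤ M := Nat.le_sqrt.mpr (by omega)
  have hMsq : M * M ≤ N := Nat.sqrt_le N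
  have hMN : M ≤ N := Nat.sqrt_le_self N
  have hNsucc : N < (M+1) * (M+1) := Nat.lt_succ_sqrt N
  -- Step 1: identity
  have step1 : ∑ n ∈ Finset.Icc 1 N, ((B n : ℝ) - (beta n : ℝ))
      = ∑ p ∈ (range (N+1)).filter Nat.Prime,
          ∑ k ∈ Icc 2 N, ((N / p^k : ℕ) : ℝ) * p := by
    rw [← swap_lemma 2 N (by norm_num) (fun p => (p:ℝ))]
    refine Finset.sum_congr rfl fun n hn => ?_
    rw [Finset.mem_Icc] at hn
    exact B_sub_beta_eq n hn.1
  set P := (range (N+1)).filter Nat.Prime with hP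
  set PM := (range (M+1)).filter Nat.Prime with hPM
  have hPfact : ∀ p ∈ P, p.Prime ∧ 2 ≤ p ∧ (0:ℝ) < p := by
    intro p hp
    rw [hP, Finset.mem_filter] at hp
    have h2 : 2 ≤ p := hp.2.two_le
    exact ⟨hp.2, h2, by exact_mod_cast Nat.lt_of_lt_of_le (by norm_num) h2⟩
  -- Step 2: split k = 2 and the tail
  have split : ∀ p ∈ P, ∑ k ∈ Icc 2 N, ((N / p^k : ℕ) : ℝ) * p
      = ((N / p^2 : ℕ) : ℝ) * p + ∑ k ∈ Icc 3 N, ((N / p^k : ℕ) : ℝ) * p := by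
    intro p hp
    have h1 : Icc 2 N = insert 2 (Icc 3 N) := by ext j; simp; omega
    rw [h1, Finset.sum_insert (by simp)]
  -- tail bound
  have tail_nonneg : 0 ≤ ∑ p ∈ P, ∑ k ∈ Icc 3 N, ((N / p^k : ℕ) : ℝ) * p := by
    refine Finset.sum_nonneg fun p hp => Finset.sum_nonneg fun k _ => ?_
    have := (hPfact p hp).2.2
    positivity
  have tail_le : ∑ p ∈ P, ∑ k ∈ Icc 3 N, ((N / p^k : ℕ) : ℝ) * p ≤ 2 * N := by
    have hper : ∀ p ∈ P, ∑ k ∈ Icc 3 N, ((N / p^k : ℕ) : ℝ) * p ≤ 2 * N * (1/(p:ℝ)^2) := by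
      intro p hp
      obtain ⟨hpp, hp2, hpR⟩ := hPfact p hp
      have step : ∀ k ∈ Icc 3 N, ((N / p^k : ℕ) : ℝ) * p ≤ (N * ((1:ℝ)/p)^k) * p := by
        intro k _
        refine mul_le_mul_of_nonneg_right ?_ hpR.le
        calc ((N / p^k : ℕ) : ℝ) ≤ (N:ℝ)/(p^k : ℕ) := nat_div_le_real N (p^k)
          _ = N * ((1:ℝ)/p)^k := by push_cast; rw [div_pow]; ring_nf
      calc ∑ k ∈ Icc 3 N, ((N / p^k : ℕ) : ℝ) * p
          ≤ ∑ k ∈ Icc 3 N, (N * ((1:ℝ)/p)^k) * p := Finset.sum_le_sum step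
        _ = (N * p) * ∑ k ∈ Icc 3 N, ((1:ℝ)/p)^k := by
            rw [Finset.mul_sum]; exact Finset.sum_congr rfl fun k _ => by ring
        _ ≤ (N * p) * (2 * (1/p)^3) := by
            refine mul_le_mul_of_nonneg_left (geom_tail_le hp2 3 N) (by positivity)
        _ = 2 * N * (1/(p:ℝ)^2) * ((p:ℝ) * (1/p)) := by field_simp
        _ = 2 * N * (1/(p:ℝ)^2) := by
            rw [mul_one_div_cancel (ne_of_gt hpR), mul_one]
    calc ∑ p ∈ P, ∑ k ∈ Icc 3 N, ((N / p^k : ℕ) : ℝ) * p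
        ≤ ∑ p ∈ P, 2 * N * (1/(p:ℝ)^2) := Finset.sum_le_sum hper
      _ = 2 * N * ∑ p ∈ P, 1/(p:ℝ)^2 := by rw [Finset.mul_sum]
      _ ≤ 2 * N * ∑ m ∈ Icc 2 N, 1/(m:ℝ)^2 := by
          refine mul_le_mul_of_nonneg_left ?_ (by positivity)
          refine Finset.sum_le_sum_of_subset_of_nonneg ?_ (fun m _ _ => by positivity)
          intro p hp
          obtain ⟨hpp, hp2, _⟩ := hPfact p hp
          rw [hP, Finset.mem_filter, Finset.mem_range] at hp
          rw [Finset.mem_Icc]; omega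
      _ ≤ 2 * N * 1 := by
          refine mul_le_mul_of_nonneg_left (sum_inv_sq_le N) (by positivity)
      _ = 2 * N := by ring
  -- k = 2 part: restrict to primes ≤ M
  have k2_restrict : ∑ p ∈ P, ((N / p^2 : ℕ) : ℝ) * p = ∑ p ∈ PM, ((N / p^2 : ℕ) : ℝ) * p := by
    refine (Finset.sum_subset ?_ ?_).symm
    · rw [hP, hPM]
      refine Finset.filter_subset_filter _ ?_
      exact Finset.range_subset_range.mpr (by omega)
    · intro p hp hnp
      rw [hP, Finset.mem_filter, Finset.mem_range] at hp
      rw [hPM, Finset.mem_filter, Finset.mem_range] at hnp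
      have hpM : M < p := by
        by_contra h
        exact hnp ⟨by omega, hp.2⟩
      have : N < p^2 := by
        have := Nat.sqrt_lt'.mp hpM
        omega
      rw [Nat.div_eq_of_lt this]
      simp
  -- compare with N * sum of reciprocals
  have k2_cmp : |(∑ p ∈ PM, ((N / p^2 : ℕ) : ℝ) * p) - N * ∑ p ∈ PM, 1/(p:ℝ)|
      ≤ 2 * N := by
    have hrw : N * (∑ p ∈ PM, 1/(p:ℝ)) = ∑ p ∈ PM, (N:ℝ)/p := by
      rw [Finset.mul_sum]; exact Finset.sum_congr rfl fun p hp => by ring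
    rw [hrw, ← Finset.sum_sub_distrib]
    have hPMfact : ∀ p ∈ PM, p.Prime ∧ 2 ≤ p ∧ (0:ℝ) < p ∧ p ≤ M := by
      intro p hp
      rw [hPM, Finset.mem_filter, Finset.mem_range] at hp
      have h2 : 2 ≤ p := hp.2.two_le
      exact ⟨hp.2, h2, by exact_mod_cast Nat.lt_of_lt_of_le (by norm_num) h2, by omega⟩
    calc |∑ p ∈ PM, (((N / p^2 : ℕ) : ℝ) * p - (N:ℝ)/p)|
        ≤ ∑ p ∈ PM, |((N / p^2 : ℕ) : ℝ) * p - (N:ℝ)/p| := Finset.abs_sum_le_sum_abs _ _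
      _ ≤ ∑ p ∈ PM, (p:ℝ) := by
          refine Finset.sum_le_sum fun p hp => ?_
          obtain ⟨hpp, hp2, hpR, hpM⟩ := hPMfact p hp
          have hup : ((N / p^2 : ℕ) : ℝ) ≤ (N:ℝ)/(p:ℝ)^2 := by
            have := nat_div_le_real N (p^2)
            push_cast at this ⊢
            convert this using 2
          have hlo : (N:ℝ)/(p:ℝ)^2 - 1 ≤ ((N / p^2 : ℕ) : ℝ) := by
            have := real_div_sub_one_le_nat_div N (p^2) (by positivity)
            push_cast at this ⊢
            convert this using 3
          rw [abs_le]
          constructor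
          · have : ((N:ℝ)/(p:ℝ)^2 - 1) * p ≤ ((N / p^2 : ℕ) : ℝ) * p :=
              mul_le_mul_of_nonneg_right hlo hpR.le
            have hid : ((N:ℝ)/(p:ℝ)^2 - 1) * p = (N:ℝ)/p - p := by field_simp
            linarith [hid ▸ this]
          · have : ((N / p^2 : ℕ) : ℝ) * p ≤ ((N:ℝ)/(p:ℝ)^2) * p :=
              mul_le_mul_of_nonneg_right hup hpR.le
            have hid : ((N:ℝ)/(p:ℝ)^2) * p = (N:ℝ)/p := by field_simp
            linarith [hid ▸ this]
      _ ≤ ∑ p ∈ PM, (M:ℝ) := by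
          refine Finset.sum_le_sum fun p hp => ?_
          exact_mod_cast (hPMfact p hp).2.2.2
      _ = (PM.card : ℝ) * M := by rw [Finset.sum_const, nsmul_eq_mul]
      _ ≤ ((M:ℝ) + 1) * M := by
          refine mul_le_mul_of_nonneg_right ?_ (by positivity)
          have h1 : PM.card ≤ M + 1 := by
            calc PM.card ≤ (range (M+1)).card := Finset.card_filter_le _ _
              _ = M + 1 := Finset.card_range _
          push_cast
          exact_mod_cast h1
      _ ≤ 2 * N := by
          have h1 : (M:ℝ) * M ≤ N := by exact_mod_cast hMsq
          have h2 : (M:ℝ) ≤ N := by exact_mod_cast hMN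
          nlinarith
  -- Mertens for primes up to M
  have hmert := mertens2 M (by omega)
  rw [← hPM] at hmert
  -- log log M vs log log x
  have hlogx : Real.log 16 ≤ Real.log x := Real.log_le_log (by norm_num) (by linarith)
  have hlog16 : (1:ℝ) ≤ Real.log 16 := by
    have h4 : Real.exp 1 ≤ 16 := by
      have := Real.exp_one_lt_d9
      linarith
    calc (1:ℝ) = Real.log (Real.exp 1) := (Real.log_exp 1).symm
      _ ≤ Real.log 16 := Real.log_le_log (Real.exp_pos 1) h4
  have hlogxpos : (1:ℝ) ≤ Real.log x := le_trans hlog16 hlogx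
  have hlog4 : Real.log 4 ≤ 2 := by
    have := Real.log_le_sub_one_of_pos (show (0:ℝ) < 2 by norm_num)
    have h42 : Real.log 4 = 2 * Real.log 2 := by
      rw [show (4:ℝ) = 2^2 by norm_num, Real.log_pow]; norm_num
    linarith
  have hlog4pos : 0 ≤ Real.log 4 := Real.log_nonneg (by norm_num)
  have hMR : (10:ℝ) ≤ (M:ℝ) := by exact_mod_cast hM10
  have hlogM_up : Real.log M ≤ Real.log x :=
    Real.log_le_log (by linarith) (by
      calc (M:ℝ) ≤ N := by exact_mod_cast hMN
        _ ≤ x := hNx)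
  have hlogM_lo : (Real.log x - Real.log 4) / 2 ≤ Real.log M := by
    have hx4M : x ≤ 4 * (M:ℝ)^2 := by
      have h1 : (N:ℝ) < ((M:ℝ)+1) * ((M:ℝ)+1) := by exact_mod_cast hNsucc
      nlinarith
    have : Real.log x ≤ Real.log (4 * (M:ℝ)^2) := Real.log_le_log hxpos hx4M
    rw [Real.log_mul (by norm_num) (by positivity), Real.log_pow] at this
    push_cast at this
    linarith
  have hlogM_pos : (1:ℝ) ≤ Real.log M := by
    have h16 : Real.log 16 ≤ Real.log (4 * (M:ℝ)^2) := by
      apply Real.log_le_log (by norm_num)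
      nlinarith
    have h2 : (Real.log x - Real.log 4)/2 ≥ (Real.log 16 - Real.log 4)/2 := by linarith
    have h164 : Real.log 16 - Real.log 4 = Real.log 4 := by
      rw [show (16:ℝ) = 4 * 4 by norm_num, Real.log_mul (by norm_num) (by norm_num)]
      ring
    have hlog4ge1 : (1:ℝ) ≤ Real.log 4 := by
      have : Real.exp 1 ≤ 4 := by
        have := Real.exp_one_lt_d9
        linarith
      calc (1:ℝ) = Real.log (Real.exp 1) := (Real.log_exp 1).symm
        _ ≤ Real.log 4 := Real.log_le_log (Real.exp_pos 1) this
    -- log M ≥ (log x - log 4)/2 ≥ (log 16 - log4)/2 = log4/2 ≥ 1/2 ... need ≥ 1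
    -- use log x ≥ log 100 instead
    have hlogx100 : Real.log 100 ≤ Real.log x := Real.log_le_log (by norm_num) (by linarith)
    have h100 : Real.log 100 = Real.log 4 + Real.log 25 := by
      rw [← Real.log_mul (by norm_num) (by norm_num)]
      norm_num
    have hlog25 : (2:ℝ) ≤ Real.log 25 := by
      have he2 : Real.exp 2 ≤ 25 := by
        have h1 := Real.exp_one_lt_d9
        have : Real.exp 2 = Real.exp 1 * Real.exp 1 := by
          rw [← Real.exp_add]; norm_num
        nlinarith [Real.exp_pos 1]
      calc (2:ℝ) = Real.log (Real.exp 2) := (Real.log_exp 2).symm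
        _ ≤ Real.log 25 := Real.log_le_log (Real.exp_pos 2) he2
    linarith
  have hloglogM_up : Real.log (Real.log M) ≤ Real.log (Real.log x) :=
    Real.log_le_log (by linarith) hlogM_up
  have hloglogM_lo : Real.log (Real.log x) - Real.log 4 ≤ Real.log (Real.log M) := by
    have h1 : Real.log x / 4 ≤ (Real.log x - Real.log 4)/2 := by
      -- need log x ≥ 2 log 4, i.e. x ≥ 16 gives log x ≥ log 16 = 2 log 4
      have h16 : Real.log 16 = 2 * Real.log 4 := by
        rw [show (16:ℝ) = 4^2 by norm_num, Real.log_pow]; norm_num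
      linarith
    have h2 : Real.log (Real.log x / 4) ≤ Real.log (Real.log M) := by
      apply Real.log_le_log (by positivity)
      linarith
    rw [Real.log_div (by linarith) (by norm_num)] at h2
    linarith
  -- assemble
  have habs1 : |(∑ p ∈ PM, 1/(p:ℝ)) - Real.log (Real.log M)| ≤ 60 := hmert
  have hsum_est : |(∑ n ∈ Finset.Icc 1 N, ((B n : ℝ) - (beta n : ℝ)))
      - (N:ℝ) * Real.log (Real.log M)| ≤ 64 * N := by
    rw [step1, Finset.sum_congr rfl split, Finset.sum_add_distrib, k2_restrict]
    have h60 : |(N:ℝ) * (∑ p ∈ PM, 1/(p:ℝ)) - (N:ℝ) * Real.log (Real.log M)| ≤ 60 * N := by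
      rw [← mul_sub, abs_mul, abs_of_nonneg (by positivity : (0:ℝ) ≤ (N:ℝ))]
      calc (N:ℝ) * |(∑ p ∈ PM, 1/(p:ℝ)) - Real.log (Real.log M)| ≤ (N:ℝ) * 60 :=
            mul_le_mul_of_nonneg_left habs1 (by positivity)
        _ = 60 * N := by ring
    rw [abs_le] at k2_cmp h60 ⊢
    constructor
    · linarith [k2_cmp.1, h60.1, tail_nonneg, tail_le]
    · linarith [k2_cmp.2, h60.2, tail_nonneg, tail_le]
  -- from N * log log M to x * log log x
  have hloglogx_pos : 0 ≤ Real.log (Real.log x) := Real.log_nonneg hlogxpos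
  have hloglogx_le : Real.log (Real.log x) ≤ x := by
    have h1 : Real.log (Real.log x) ≤ Real.log x - 1 :=
      Real.log_le_sub_one_of_pos (by linarith)
    have h2 : Real.log x ≤ x - 1 := Real.log_le_sub_one_of_pos hxpos
    linarith
  have hfinal : |(N:ℝ) * Real.log (Real.log M) - x * Real.log (Real.log x)| ≤ 3 * x := by
    have hsplit : (N:ℝ) * Real.log (Real.log M) - x * Real.log (Real.log x)
        = (N:ℝ) * (Real.log (Real.log M) - Real.log (Real.log x))
          + ((N:ℝ) - x) * Real.log (Real.log x) := by ring
    rw [hsplit]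
    have h1 : |(N:ℝ) * (Real.log (Real.log M) - Real.log (Real.log x))| ≤ 2 * x := by
      rw [abs_mul, abs_of_nonneg (by positivity : (0:ℝ) ≤ (N:ℝ))]
      have hd : |Real.log (Real.log M) - Real.log (Real.log x)| ≤ 2 := by
        rw [abs_le]
        constructor <;> [linarith; linarith]
      calc (N:ℝ) * |Real.log (Real.log M) - Real.log (Real.log x)| ≤ (N:ℝ) * 2 :=
            mul_le_mul_of_nonneg_left hd (by positivity)
        _ ≤ 2 * x := by linarith
    have h2 : |((N:ℝ) - x) * Real.log (Real.log x)| ≤ x := by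
      rw [abs_mul, abs_of_nonneg hloglogx_pos]
      have : |(N:ℝ) - x| ≤ 1 := by
        rw [abs_le]; constructor <;> linarith
      calc |(N:ℝ) - x| * Real.log (Real.log x) ≤ 1 * Real.log (Real.log x) :=
            mul_le_mul_of_nonneg_right this hloglogx_pos
        _ ≤ x := by linarith
    calc |(N:ℝ) * (Real.log (Real.log M) - Real.log (Real.log x))
          + ((N:ℝ) - x) * Real.log (Real.log x)|
        ≤ |(N:ℝ) * (Real.log (Real.log M) - Real.log (Real.log x))|
          + |((N:ℝ) - x) * Real.log (Real.log x)| := abs_add_le _ _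
      _ ≤ 3 * x := by linarith
  -- final combination
  rw [abs_le] at hsum_est hfinal ⊢
  have hNx' : (N:ℝ) ≤ x := hNx
  have hN0 : (0:ℝ) ≤ (N:ℝ) := by positivity
  constructor
  · linarith [hsum_est.1, hfinal.1]
  · linarith [hsum_est.2, hfinal.2]

end AuxMertens

/-- The average order of `B_a(n) - β_a(n)` is `log log n`:
`∑_{n ≤ x} (B_a(n) - β_a(n)) = x log log x + O(x)` as `x → ∞`. -/
theorem summatory_Ba_sub_betaa (a : ℕ) (ha : 0 < a) :
    (fun x : ℝ =>
        (∑ n ∈ Finset.Icc 1 ⌊x⌋₊, ((Ba a n : ℝ) - (betaa a n : ℝ))) -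
          x * Real.log (Real.log x)) =O[atTop] (fun x : ℝ => x) := by
  rw [Asymptotics.isBigO_iff]
  refine ⟨100, ?_⟩
  filter_upwards [eventually_ge_atTop (100:ℝ)] with x hx
  have hpt : ∑ n ∈ Finset.Icc 1 ⌊x⌋₊, ((Ba a n : ℝ) - (betaa a n : ℝ))
      = ∑ n ∈ Finset.Icc 1 ⌊x⌋₊, ((B n : ℝ) - (beta n : ℝ)) :=
    Finset.sum_congr rfl fun n _ => Ba_sub_betaa a n
  rw [hpt]
  calc |(∑ n ∈ Finset.Icc 1 ⌊x⌋₊, ((B n : ℝ) - (beta n : ℝ))) - x * Real.log (Real.log x)|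
      ≤ 100 * x := main_estimate x hx
    _ ≤ 100 * |x| := by
        have : x ≤ |x| := le_abs_self x
        linarith
end

section
/- For every complex number s with Re(s) > 1, the Dirichlet series of the completely multiplicative function (−1)^{B(n)} satisfies ∑_{n=1}^∞ (−1)^{B(n)} n^{−s} = ((2^s + 1)/(2^s − 1)) · ζ(2s)/ζ(s), where ζ is the Riemann zeta function. -/
open Complex Nat EulerProduct

lemma B_mul {m n : ℕ} (hm : m ≠ 0) (hn : n ≠ 0) : B (m * n) = B m + B n := by
  unfold B
  rw [(Nat.perm_primeFactorsList_mul hm hn).sum_eq, List.sum_append]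

lemma B_prime {p : ℕ} (hp : p.Prime) : B p = p := by
  simp [B, Nat.primeFactorsList_prime hp]

/-- The completely multiplicative function `n ↦ (-1)^(B n) * n^(-s)`. -/
noncomputable def negBHom (s : ℂ) (hs : s ≠ 0) : ℕ →*₀ ℂ where
  toFun n := (-1 : ℂ) ^ B n * (n : ℂ) ^ (-s)
  map_zero' := by simp [B, hs]
  map_one' := by simp [B]
  map_mul' m n := by
    show (-1 : ℂ) ^ B (m * n) * ((m * n : ℕ) : ℂ) ^ (-s) =
      ((-1 : ℂ) ^ B m * (m : ℂ) ^ (-s)) * ((-1 : ℂ) ^ B n * (n : ℂ) ^ (-s))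
    rcases eq_or_ne m 0 with rfl | hm
    · simp [B, hs]
    rcases eq_or_ne n 0 with rfl | hn
    · simp [B, hs]
    have h1 : ((m * n : ℕ) : ℂ) ^ (-s) = (m : ℂ) ^ (-s) * (n : ℂ) ^ (-s) := by
      simpa only [Nat.cast_mul, ofReal_natCast]
        using mul_cpow_ofReal_nonneg m.cast_nonneg n.cast_nonneg (-s)
    rw [B_mul hm hn, pow_add, h1]
    ring

lemma summable_negBHom {s : ℂ} (hs : 1 < s.re) :
    Summable (fun n ↦ ‖negBHom s (ne_zero_of_one_lt_re hs) n‖) := by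
  have := summable_riemannZetaSummand hs
  simp only [riemannZetaSummandHom, MonoidWithZeroHom.coe_mk, ZeroHom.coe_mk] at this
  simpa only [negBHom, MonoidWithZeroHom.coe_mk, ZeroHom.coe_mk, norm_mul, norm_pow,
    norm_neg, norm_one, one_pow, one_mul] using this

lemma two_cpow_ne (s : ℂ) (hs : 1 < s.re) :
    ‖(2 : ℂ) ^ s‖ = (2 : ℝ) ^ s.re := by
  rw [show (2 : ℂ) = ((2 : ℝ) : ℂ) by norm_num,
    norm_cpow_eq_rpow_re_of_pos (by norm_num)]

lemma one_lt_norm_two_cpow {s : ℂ} (hs : 1 < s.re) : 1 < ‖(2 : ℂ) ^ s‖ := by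
  rw [two_cpow_ne s hs]
  calc (1 : ℝ) < 2 ^ (1 : ℝ) := by norm_num
  _ ≤ 2 ^ s.re := by
    apply Real.rpow_le_rpow_left_iff (by norm_num : (1:ℝ) < 2) |>.mpr hs.le

lemma two_cpow_sub_one_ne {s : ℂ} (hs : 1 < s.re) : (2 : ℂ) ^ s - 1 ≠ 0 := by
  intro h
  have h1 : (2 : ℂ) ^ s = 1 := by linear_combination h
  have h2 := one_lt_norm_two_cpow hs
  rw [h1, norm_one] at h2
  exact lt_irrefl 1 h2

lemma two_cpow_add_one_ne {s : ℂ} (hs : 1 < s.re) : (2 : ℂ) ^ s + 1 ≠ 0 := by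
  intro h
  have h2 : (2 : ℂ) ^ s = -1 := by linear_combination h
  have := one_lt_norm_two_cpow hs
  rw [h2] at this
  simp at this

/-- For `Re(s) > 1`, the Dirichlet series of `(-1)^{B(n)}` equals
`((2^s + 1)/(2^s - 1)) ζ(2s)/ζ(s)`. -/
theorem dirichlet_series_neg_one_pow_B (s : ℂ) (hs : 1 < s.re) :
    ∑' n : ℕ+, (-1 : ℂ) ^ B n / (n : ℂ) ^ s =
      (2 ^ s + 1) / (2 ^ s - 1) * (riemannZeta (2 * s) / riemannZeta s) := by
  have hs0 : s ≠ 0 := ne_zero_of_one_lt_re hs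
  have h2s : 1 < (2 * s).re := by
    simp only [mul_re, re_ofNat, im_ofNat, zero_mul, sub_zero]
    linarith
  set f := negBHom s hs0 with hf
  set S := ∑' n : ℕ, f n with hS
  -- LHS equals S
  have hLHS : ∑' n : ℕ+, (-1 : ℂ) ^ B n / (n : ℂ) ^ s = S := by
    rw [hS]
    have hinj : Function.Injective (fun n : ℕ+ ↦ (n : ℕ)) := fun a b h ↦ PNat.coe_injective h
    rw [← hinj.tsum_eq (f := fun n : ℕ ↦ (f n : ℂ)) ?_]
    · apply tsum_congr
      intro n
      simp only [hf, negBHom, MonoidWithZeroHom.coe_mk, ZeroHom.coe_mk]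
      rw [cpow_neg, div_eq_mul_inv]
    · intro x hx
      rcases Nat.eq_zero_or_pos x with rfl | hpos
      · simp [Function.mem_support, map_zero] at hx
      · exact ⟨⟨x, hpos⟩, rfl⟩
  rw [hLHS]
  -- Euler products
  have hprodS : HasProd (fun p : Nat.Primes ↦ (1 - f p)⁻¹) S :=
    eulerProduct_completely_multiplicative_hasProd (summable_negBHom hs)
  have hprodZ : HasProd (fun p : Nat.Primes ↦ (1 - (p : ℂ) ^ (-s))⁻¹) (riemannZeta s) :=
    riemannZeta_eulerProduct_hasProd hs
  have hprodZ2 : HasProd (fun p : Nat.Primes ↦ (1 - (p : ℂ) ^ (-(2 * s)))⁻¹)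
      (riemannZeta (2 * s)) := riemannZeta_eulerProduct_hasProd h2s
  set E : ℂ := (2 ^ s + 1) / (2 ^ s - 1) with hE
  set p2 : Nat.Primes := ⟨2, Nat.prime_two⟩ with hp2
  have hprodE : HasProd (fun p : Nat.Primes ↦ if p = p2 then E else 1) E := by
    have := hasProd_single (f := fun p : Nat.Primes ↦ if p = p2 then E else 1) p2
      (fun b hb ↦ if_neg hb)
    simpa using this
  have key : ∀ p : Nat.Primes,
      (1 - (p : ℂ) ^ (-s))⁻¹ * (1 - f p)⁻¹ =
      (1 - (p : ℂ) ^ (-(2 * s)))⁻¹ * (if p = p2 then E else 1) := by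
    intro p
    have hp : (p : ℕ).Prime := p.prop
    have hpc : ((p : ℕ) : ℂ) ≠ 0 := Nat.cast_ne_zero.mpr hp.ne_zero
    have hfp : f p = (-1 : ℂ) ^ (p : ℕ) * ((p : ℕ) : ℂ) ^ (-s) := by
      simp only [hf, negBHom, MonoidWithZeroHom.coe_mk, ZeroHom.coe_mk, B_prime hp]
    have hsq : ((p : ℕ) : ℂ) ^ (-(2 * s)) = ((p : ℕ) : ℂ) ^ (-s) * ((p : ℕ) : ℂ) ^ (-s) := by
      rw [← cpow_add _ _ hpc]; ring_nf
    by_cases hp2' : p = p2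
    · subst hp2'
      simp only [if_pos rfl]
      have h2 : ((p2 : ℕ) : ℂ) = 2 := by norm_num [hp2]
      rw [hfp, hsq, h2]
      have hx : (2 : ℂ) ^ (-s) = ((2 : ℂ) ^ s)⁻¹ := cpow_neg 2 s
      have hy0 : (2 : ℂ) ^ s ≠ 0 := by
        intro h; have := one_lt_norm_two_cpow hs; rw [h, norm_zero] at this; linarith
      have hym : (2 : ℂ) ^ s - 1 ≠ 0 := two_cpow_sub_one_ne hs
      have hyp : (2 : ℂ) ^ s + 1 ≠ 0 := two_cpow_add_one_ne hs
      have hpow : ((-1 : ℂ)) ^ ((p2 : ℕ)) = 1 := by norm_num [hp2]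
      rw [hpow, one_mul, hx, hE]
      have hinv : (1 : ℂ) - ((2:ℂ)^s)⁻¹ ≠ 0 := by
        rw [show (1 : ℂ) - ((2:ℂ)^s)⁻¹ = ((2:ℂ)^s - 1) / (2:ℂ)^s by field_simp]
        exact div_ne_zero hym hy0
      have e1 : (1 : ℂ) - ((2:ℂ)^s)⁻¹ = ((2:ℂ)^s - 1) / (2:ℂ)^s := by field_simp
      have e2 : (1 : ℂ) - ((2:ℂ)^s)⁻¹ * ((2:ℂ)^s)⁻¹ =
          ((2:ℂ)^s - 1) * ((2:ℂ)^s + 1) / ((2:ℂ)^s * (2:ℂ)^s) := by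
        field_simp
        ring
      rw [e1, e2, inv_div, inv_div, if_true]
      field_simp
    · simp only [if_neg hp2', mul_one]
      have hodd : Odd (p : ℕ) := hp.odd_of_ne_two (by
        intro h
        exact hp2' (Subtype.ext h))
      rw [hfp, hodd.neg_one_pow, hsq]
      rw [← mul_inv]
      congr 1
      ring
  have hprod1 : HasProd
      (fun p : Nat.Primes ↦ (1 - (p : ℂ) ^ (-s))⁻¹ * (1 - f p)⁻¹)
      (riemannZeta s * S) := hprodZ.mul hprodS
  have hprod2 : HasProd
      (fun p : Nat.Primes ↦ (1 - (p : ℂ) ^ (-(2 * s)))⁻¹ * (if p = p2 then E else 1))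
      (riemannZeta (2 * s) * E) := hprodZ2.mul hprodE
  have heq : riemannZeta s * S = riemannZeta (2 * s) * E := by
    have : HasProd
        (fun p : Nat.Primes ↦ (1 - (p : ℂ) ^ (-s))⁻¹ * (1 - f p)⁻¹)
        (riemannZeta (2 * s) * E) := by
      convert hprod2 using 1
      exact funext key
    exact hprod1.unique this
  have hz : riemannZeta s ≠ 0 := riemannZeta_ne_zero_of_one_lt_re hs
  field_simp at heq ⊢
  linear_combination heq
end

section
/- For every prime p > 6, one has B_1(B_1(p)) < p; consequently, the stopping time of the map B_1 at a prime p > 6 is 2. -/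
lemma list_sum_le_prod (l : List ℕ) (h : ∀ x ∈ l, 2 ≤ x) : l.sum ≤ l.prod := by
  induction l with
  | nil => simp
  | cons a t ih =>
    have ha : 2 ≤ a := h a (by simp)
    have ht : ∀ x ∈ t, 2 ≤ x := fun x hx => h x (by simp [hx])
    have iht := ih ht
    rcases t with _ | ⟨b, t'⟩
    · simp
    · have h2 : 2 ≤ (b :: t').prod := le_trans (ht b (by simp))
        (List.single_le_prod (fun x hx => le_trans (by norm_num) (ht x hx)) b (by simp))
      rw [List.sum_cons, List.prod_cons]
      nlinarith [iht, h2, ha]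

lemma B_le (n : ℕ) : B n ≤ n := by
  rcases Nat.eq_zero_or_pos n with rfl | hn
  · simp [B]
  calc B n ≤ (Nat.primeFactorsList n).prod :=
        list_sum_le_prod _ (fun x hx => (Nat.prime_of_mem_primeFactorsList hx).two_le)
    _ = n := Nat.prod_primeFactorsList hn.ne'

lemma B_two_mul (m : ℕ) (hm : m ≠ 0) : B (2 * m) = 2 + B m := by
  have := Nat.perm_primeFactorsList_mul (a := 2) (b := m) two_ne_zero hm
  have hs := this.sum_eq
  simp [B, hs, Nat.primeFactorsList_prime Nat.prime_two]

/-- For every prime `p > 6`, `B₁(B₁(p)) < p` while `p < B₁(p)`;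
consequently the stopping time of `B₁` at `p` is `2`. -/
theorem B1_stopping_time_two (p : ℕ) (hp : p.Prime) (hp6 : 6 < p) :
    Ba 1 (Ba 1 p) < p ∧ p < Ba 1 p := by
  have h1 : Ba 1 p = p + 1 := by simp [Ba, hp]
  have hodd : Odd p := hp.odd_of_ne_two (by omega)
  obtain ⟨m, hm⟩ : ∃ m, p + 1 = 2 * m := by
    obtain ⟨k, hk⟩ := hodd; exact ⟨k + 1, by omega⟩
  have hm0 : m ≠ 0 := by omega
  have hnp : ¬ (p + 1).Prime := by
    intro h
    rw [hm] at h
    rcases h.eq_one_or_self_of_dvd 2 ⟨m, rfl⟩ with h2 | h2 <;> omega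
  constructor
  · rw [h1, Ba, if_neg hnp, hm, B_two_mul m hm0]
    have := B_le m
    omega
  · omega
end

section
/- Every prime p > 3 occurs in a 2-cycle for some shift: for every prime p > 3 there exists a positive integer a such that B_a(p) > p and B_a(B_a(p)) = p. -/
/-- Every prime `p > 3` occurs in a 2-cycle `(p, B_a(p))` for some shift `a`. -/
theorem prime_in_two_cycle (p : ℕ) (hp : p.Prime) (hp3 : 3 < p) :
    ∃ a : ℕ, 0 < a ∧ p < Ba a p ∧ Ba a (Ba a p) = p := by
  have hodd : Odd p := hp.odd_of_ne_two (by omega)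
  obtain ⟨k, hk⟩ := hodd
  set m : ℕ := (p - 3) / 2 with hm
  have hm1 : 1 ≤ m := by omega
  have hpm : p = 2 * m + 3 := by omega
  have hlt : m < 2 ^ m := Nat.lt_two_pow_self (n := m)
  have hgt : p < 3 * 2 ^ m := by nlinarith
  have h1 : p + (3 * 2 ^ m - p) = 3 * 2 ^ m := by omega
  refine ⟨3 * 2 ^ m - p, by omega, ?_, ?_⟩
  · rw [Ba, if_pos hp]; omega
  simp only [Ba, if_pos hp, h1]
  have hnp : ¬ (3 * 2 ^ m).Prime := by
    intro h
    rcases h.eq_one_or_self_of_dvd 2 ((dvd_pow_self 2 (by omega : m ≠ 0)).mul_left 3)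
      with h2 | h2 <;> omega
  rw [if_neg hnp, B]
  have hperm := Nat.perm_primeFactorsList_mul (a := 3) (b := 2 ^ m) (by norm_num)
    (by positivity)
  rw [hperm.sum_eq, List.sum_append, Nat.primeFactorsList_prime (by norm_num),
    Nat.Prime.primeFactorsList_pow Nat.prime_two, List.sum_replicate, smul_eq_mul, List.sum_cons, List.sum_nil]
  omega
end

section
/- For every positive integer a, every orbit of B_a enters the interval [1, 2a² + 10]: for every positive integer n there exists k ≥ 0 such that B_a^k(n) ≤ 2a² + 10. -/
lemma B_rec (n : ℕ) (h : 2 ≤ n) : B n = n.minFac + B (n / n.minFac) := by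
  obtain ⟨m, rfl⟩ : ∃ m, n = m + 2 := ⟨n - 2, by omega⟩
  rw [B, B, Nat.primeFactorsList_add_two, List.sum_cons]

lemma B_ge_two (n : ℕ) (h : 2 ≤ n) : 2 ≤ B n := by
  rw [B_rec n h]
  have := (Nat.minFac_prime (show n ≠ 1 by omega)).two_le
  omega

lemma B_half (m : ℕ) (h2 : 2 ≤ m) (hp : ¬ m.Prime) : B m ≤ 2 + m / 2 := by
  have hpp := Nat.minFac_prime (show m ≠ 1 by omega)
  have hd : m.minFac ∣ m := Nat.minFac_dvd m
  have hmul : m.minFac * (m / m.minFac) = m := Nat.mul_div_cancel' hd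
  have hps : m.minFac ≤ m / m.minFac := Nat.minFac_le_div (by omega) hp
  have hp2 : 2 ≤ m.minFac := hpp.two_le
  have hs2 : 2 ≤ m / m.minFac := le_trans hp2 hps
  have hBs : B (m / m.minFac) ≤ m / m.minFac := B_le _
  have key : 2 * (m.minFac + m / m.minFac) ≤ 4 + m.minFac * (m / m.minFac) := by nlinarith
  rw [B_rec m h2]
  omega

lemma descent (a : ℕ) (ha : 0 < a) (n : ℕ) (hn : 2 * a ^ 2 + 10 < n) :
    ∃ j : ℕ, 2 ≤ (Ba a)^[j] n ∧ (Ba a)^[j] n < n := by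
  have ha2 : 1 ≤ a ^ 2 := Nat.one_le_pow _ _ ha
  have haa : a ≤ a ^ 2 := by nlinarith
  have hn13 : 13 ≤ n := by omega
  by_cases hp : n.Prime
  · set q := (a + 1).minFac with hq
    have hqp : q.Prime := Nat.minFac_prime (by omega)
    have hqd : q ∣ a + 1 := Nat.minFac_dvd _
    have hqa : ¬ q ∣ a := by
      intro h
      have h1 : q ∣ 1 := by
        have := Nat.dvd_sub hqd h
        simpa using this
      have := Nat.le_of_dvd one_pos h1
      have := hqp.two_le
      omega
    have hqle : q ≤ a + 1 := Nat.minFac_le (by omega)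
    have hq2 : 2 ≤ q := hqp.two_le
    have hex : ∃ k, 1 ≤ k ∧ k ≤ q ∧ q ∣ n + k * a := by
      haveI : Fact q.Prime := ⟨hqp⟩
      have haz : (a : ZMod q) ≠ 0 := by
        rw [Ne, ZMod.natCast_eq_zero_iff]
        exact hqa
      set u : ZMod q := (-(n : ZMod q)) * (a : ZMod q)⁻¹ with hu
      have hcast : (((if u.val = 0 then q else u.val) : ℕ) : ZMod q) = u := by
        split
        · rw [ZMod.natCast_self]
          exact (((ZMod.val_eq_zero u).mp ‹_›)).symm
        · exact ZMod.natCast_zmod_val u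
      refine ⟨if u.val = 0 then q else u.val, ?_, ?_, ?_⟩
      · split <;> omega
      · split
        · exact le_rfl
        · exact le_of_lt (ZMod.val_lt u)
      · rw [← ZMod.natCast_eq_zero_iff, Nat.cast_add, Nat.cast_mul, hcast, hu]
        field_simp
        ring
    obtain ⟨k, hk1, hkq, hkd⟩ := hex
    have hknp : ¬ (n + k * a).Prime := by
      intro hP
      rcases hP.eq_one_or_self_of_dvd q hkd with h1 | h2
      · omega
      · have : 1 ≤ k * a := Nat.one_le_iff_ne_zero.mpr (by positivity)
        omega
    have hEx : ∃ i, 1 ≤ i ∧ ¬ (n + i * a).Prime := ⟨k, hk1, hknp⟩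
    set j := Nat.find hEx with hj
    obtain ⟨hj1, hjnp⟩ := Nat.find_spec hEx
    have hjk : j ≤ k := Nat.find_min' hEx ⟨hk1, hknp⟩
    have hiter : ∀ i ≤ j, (Ba a)^[i] n = n + i * a := by
      intro i hi
      induction i with
      | zero => simp
      | succ i ih2 =>
        have hprev : (Ba a)^[i] n = n + i * a := ih2 (by omega)
        rw [Function.iterate_succ_apply', hprev, Ba]
        have hpri : (n + i * a).Prime := by
          rcases Nat.eq_zero_or_pos i with rfl | hi1
          · simpa using hp
          · by_contra hnp
            exact Nat.find_min hEx (show i < j by omega) ⟨hi1, hnp⟩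
        rw [if_pos hpri]
        ring
    refine ⟨j + 1, ?_, ?_⟩ <;>
      rw [show (Ba a)^[j+1] n = B (n + j * a) by
            rw [Function.iterate_succ_apply', hiter j le_rfl, Ba, if_neg hjnp]]
    · exact B_ge_two _ (by omega)
    · have hBmle : B (n + j * a) ≤ 2 + (n + j * a) / 2 := B_half _ (by omega) hjnp
      have hja : j * a ≤ a ^ 2 + a := by nlinarith
      omega
  · refine ⟨1, ?_, ?_⟩ <;> rw [Function.iterate_one, Ba, if_neg hp]
    · exact B_ge_two n (by omega)
    · have := B_half n (by omega) hp
      omega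

/-- Every orbit of `B_a` enters the interval `[1, 2a² + 10]`. -/
theorem Ba_orbit_enters_interval (a : ℕ) (ha : 0 < a) (n : ℕ) (hn : 0 < n) :
    ∃ k : ℕ, (Ba a)^[k] n ≤ 2 * a ^ 2 + 10 := by
  clear hn
  induction n using Nat.strong_induction_on with
  | _ n ih =>
    by_cases hle : n ≤ 2 * a ^ 2 + 10
    · exact ⟨0, hle⟩
    · obtain ⟨j, _, hlt⟩ := descent a ha n (by omega)
      obtain ⟨k, hk⟩ := ih _ hlt
      exact ⟨k + j, by rw [Function.iterate_add_apply]; exact hk⟩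
end
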